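/- For all real c1, c2, c3, the canonical gate A(c1, c2, c3) satisfies tr(m(A(c1,c2,c3))) = 4·(cos c1·cos c2·cos c3 + i·sin c1·sin c2·sin c3) and (tr(m(A(c1,c2,c3)))² − tr(m(A(c1,c2,c3))²))/4 = 2·(cos²c1 + cos²c2 + cos²c3) − 3. -/

import Mathlib

open Matrix Kronecker

noncomputable section

/-- The Pauli matrix `σx`. -/
def σx : Matrix (Fin 2) (Fin 2) ℂ := !![0, 1; 1, 0]

/-- The Pauli matrix `σy`. -/
def σy : Matrix (Fin 2) (Fin 2) ℂ := !![0, -Complex.I; Complex.I, 0]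

/-- The Pauli matrix `σz`. -/
def σz : Matrix (Fin 2) (Fin 2) ℂ := !![1, 0; 0, -1]

/-- Kronecker (tensor) product of two `2×2` matrices, as a `4×4` matrix, with
the standard index identification `(m, n) ↦ 2*m + n`. -/
def tensor (a b : Matrix (Fin 2) (Fin 2) ℂ) : Matrix (Fin 4) (Fin 4) ℂ :=
  Matrix.reindex finProdFinEquiv finProdFinEquiv (a ⊗ₖ b)

/-- `Uf γ = exp(i (γ/2) σz ⊗ σz)`, representing (up to local equivalence) a
Controlled-`U` gate. -/
def Uf (γ : ℝ) : Matrix (Fin 4) (Fin 4) ℂ :=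
  NormedSpace.exp ((((γ : ℂ) / 2) * Complex.I) • tensor σz σz)

/-- The canonical gate
`A c1 c2 c3 = exp(i (c1/2) σx⊗σx) · exp(i (c2/2) σy⊗σy) · exp(i (c3/2) σz⊗σz)`. -/
def A (c1 c2 c3 : ℝ) : Matrix (Fin 4) (Fin 4) ℂ :=
  NormedSpace.exp ((((c1 : ℂ) / 2) * Complex.I) • tensor σx σx) *
    NormedSpace.exp ((((c2 : ℂ) / 2) * Complex.I) • tensor σy σy) *
    NormedSpace.exp ((((c3 : ℂ) / 2) * Complex.I) • tensor σz σz)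

/-- Membership in `SU(2)`: unitary with determinant one. -/
def IsSU2 (k : Matrix (Fin 2) (Fin 2) ℂ) : Prop :=
  k ∈ Matrix.unitaryGroup (Fin 2) ℂ ∧ k.det = 1

/-- Membership in `SU(4)`: unitary with determinant one. -/
def IsSU4 (U : Matrix (Fin 4) (Fin 4) ℂ) : Prop :=
  U ∈ Matrix.unitaryGroup (Fin 4) ℂ ∧ U.det = 1

/-- A local gate is a tensor product `k1 ⊗ k2` of two `SU(2)` gates. -/
def IsLocalGate (k : Matrix (Fin 4) (Fin 4) ℂ) : Prop :=
  ∃ k1 k2 : Matrix (Fin 2) (Fin 2) ℂ, IsSU2 k1 ∧ IsSU2 k2 ∧ k = tensor k1 k2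

/-- `U` and `V` are locally equivalent if `U = e^{iφ} k V k'` for some real `φ`
and local gates `k`, `k'`. -/
def LocallyEquivalent (U V : Matrix (Fin 4) (Fin 4) ℂ) : Prop :=
  ∃ (φ : ℝ) (k k' : Matrix (Fin 4) (Fin 4) ℂ), IsLocalGate k ∧ IsLocalGate k' ∧
    U = Complex.exp (φ * Complex.I) • (k * V * k')

/-- `circuit W k n = k n * W * k (n-1) * W * ⋯ * W * k 0`: the alternating
circuit consisting of `n` applications of `W` interleaved with the gates `k i`. -/
def circuit (W : Matrix (Fin 4) (Fin 4) ℂ) (k : ℕ → Matrix (Fin 4) (Fin 4) ℂ) :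
    ℕ → Matrix (Fin 4) (Fin 4) ℂ
  | 0 => k 0
  | n + 1 => k (n + 1) * W * circuit W k n

/-- `U` is generated by `n` applications of the gate `W` together with local gates:
`U = e^{iφ} · k_n · W · k_{n-1} · W ⋯ W · k_0` for some real `φ` and local gates `k_i`. -/
def GeneratedBy (W : Matrix (Fin 4) (Fin 4) ℂ) (n : ℕ) (U : Matrix (Fin 4) (Fin 4) ℂ) : Prop :=
  ∃ (φ : ℝ) (k : ℕ → Matrix (Fin 4) (Fin 4) ℂ),
    (∀ i, i ≤ n → IsLocalGate (k i)) ∧ U = Complex.exp (φ * Complex.I) • circuit W k n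

/-- The magic-basis matrix `Q`. -/
def Q : Matrix (Fin 4) (Fin 4) ℂ :=
  ((Real.sqrt 2 : ℂ))⁻¹ •
    !![1, 0, 0, Complex.I; 0, Complex.I, 1, 0; 0, Complex.I, -1, 0; 1, 0, 0, -Complex.I]

/-- `m U = (Q† U Q)ᵀ (Q† U Q)`, whose trace gives Makhlin-type local invariants. -/
def mInv (U : Matrix (Fin 4) (Fin 4) ℂ) : Matrix (Fin 4) (Fin 4) ℂ :=
  (Q.conjTranspose * U * Q)ᵀ * (Q.conjTranspose * U * Q)


open scoped Nat

noncomputable section Aux17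

namespace Aux17

lemma exp_invol (θ : ℝ) (M : Matrix (Fin 4) (Fin 4) ℂ) (h : M * M = 1) :
    NormedSpace.exp (((θ : ℂ) * Complex.I) • M) =
      ((Real.cos θ : ℂ)) • (1 : Matrix (Fin 4) (Fin 4) ℂ) +
        ((Real.sin θ : ℂ) * Complex.I) • M := by
  have hM2 : M ^ 2 = 1 := by rw [sq, h]
  rw [NormedSpace.exp_eq_tsum ℂ]
  refine HasSum.tsum_eq ?_
  have hcos : HasSum
      (fun n : ℕ => (((-1 : ℂ) ^ n * (θ : ℂ) ^ (2 * n) / ((2 * n)! : ℂ)) • (1 : Matrix (Fin 4) (Fin 4) ℂ)))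
      (((Real.cos θ : ℂ)) • (1 : Matrix (Fin 4) (Fin 4) ℂ)) := by
    have := (Complex.hasSum_cos (θ : ℂ)).smul_const (1 : Matrix (Fin 4) (Fin 4) ℂ)
    rwa [← Complex.ofReal_cos] at this
  have hsin : HasSum
      (fun n : ℕ => ((((-1 : ℂ) ^ n * (θ : ℂ) ^ (2 * n + 1) / ((2 * n + 1)! : ℂ)) * Complex.I) • M))
      ((((Real.sin θ : ℂ)) * Complex.I) • M) := by
    have := ((Complex.hasSum_sin (θ : ℂ)).mul_right Complex.I).smul_const M
    rwa [← Complex.ofReal_sin] at this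
  refine HasSum.even_add_odd ?_ ?_
  · convert hcos using 1
    · rfl
    funext n
    rw [smul_pow, pow_mul M, hM2, one_pow, smul_smul]
    congr 1
    rw [mul_pow, pow_mul Complex.I, Complex.I_sq]
    ring
  · convert hsin using 1
    · rfl
    funext n
    rw [smul_pow, pow_succ M, pow_mul M, hM2, one_pow, one_mul, smul_smul]
    congr 1
    rw [pow_succ, mul_pow, pow_mul Complex.I, Complex.I_sq]
    ring

lemma tensor_mul (a b c d : Matrix (Fin 2) (Fin 2) ℂ) :
    tensor a c * tensor b d = tensor (a * b) (c * d) := by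
  simp only [tensor, Matrix.reindex_apply, Matrix.submatrix_mul_equiv,
    ← Matrix.mul_kronecker_mul]

lemma tensor_one : tensor 1 1 = 1 := by
  simp only [tensor, Matrix.one_kronecker_one, Matrix.reindex_apply, Matrix.submatrix_one_equiv]

lemma sx_sx : σx * σx = 1 := by
  ext i j; fin_cases i <;> fin_cases j <;> simp [σx, Matrix.mul_apply, Fin.sum_univ_two]
lemma sy_sy : σy * σy = 1 := by
  ext i j; fin_cases i <;> fin_cases j <;> simp [σy, Matrix.mul_apply, Fin.sum_univ_two]
lemma sz_sz : σz * σz = 1 := by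
  ext i j; fin_cases i <;> fin_cases j <;> simp [σz, Matrix.mul_apply, Fin.sum_univ_two]

lemma XX : tensor σx σx * tensor σx σx = 1 := by rw [tensor_mul, sx_sx, tensor_one]
lemma YY : tensor σy σy * tensor σy σy = 1 := by rw [tensor_mul, sy_sy, tensor_one]
lemma ZZ : tensor σz σz * tensor σz σz = 1 := by rw [tensor_mul, sz_sz, tensor_one]

lemma Xexpl : tensor σx σx = !![0,0,0,1;0,0,1,0;0,1,0,0;1,0,0,0] := by
  ext i j
  fin_cases i <;> fin_cases j <;>
    simp [tensor, σx, Matrix.reindex_apply, Matrix.submatrix_apply,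
      finProdFinEquiv, Fin.divNat, Fin.modNat, Matrix.vecHead, Matrix.vecTail,
      show ((3:Fin 4):ℕ) = 3 from rfl, Fin.mk_one, Fin.mk_zero]

lemma Yexpl : tensor σy σy = !![0,0,0,-1;0,0,1,0;0,1,0,0;-1,0,0,0] := by
  ext i j
  fin_cases i <;> fin_cases j <;>
    simp [tensor, σy, Matrix.reindex_apply, Matrix.submatrix_apply,
      finProdFinEquiv, Fin.divNat, Fin.modNat, Matrix.vecHead, Matrix.vecTail,
      show ((3:Fin 4):ℕ) = 3 from rfl, Fin.mk_one, Fin.mk_zero, Complex.I_mul_I,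
      Complex.ext_iff]

lemma Zexpl : tensor σz σz = !![1,0,0,0;0,-1,0,0;0,0,-1,0;0,0,0,1] := by
  ext i j
  fin_cases i <;> fin_cases j <;>
    simp [tensor, σz, Matrix.reindex_apply, Matrix.submatrix_apply,
      finProdFinEquiv, Fin.divNat, Fin.modNat, Matrix.vecHead, Matrix.vecTail,
      show ((3:Fin 4):ℕ) = 3 from rfl, Fin.mk_one, Fin.mk_zero]

def Q0 : Matrix (Fin 4) (Fin 4) ℂ :=
  !![1, 0, 0, Complex.I; 0, Complex.I, 1, 0; 0, Complex.I, -1, 0; 1, 0, 0, -Complex.I]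

lemma Q0_unitary : Q0ᴴ * Q0 = (2:ℂ) • 1 := by
  ext i j
  fin_cases i <;> fin_cases j <;>
    simp [Q0, Matrix.mul_apply, Fin.sum_univ_four, Matrix.conjTranspose_apply,
      Complex.ext_iff] <;> norm_num

lemma Q0_unitary' : Q0 * Q0ᴴ = (2:ℂ) • 1 := by
  ext i j
  fin_cases i <;> fin_cases j <;>
    simp [Q0, Matrix.mul_apply, Fin.sum_univ_four, Matrix.conjTranspose_apply,
      Complex.ext_iff] <;> norm_num

lemma Q0X : Q0ᴴ * tensor σx σx * Q0 = (2:ℂ) • Matrix.diagonal ![1,1,-1,-1] := by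
  rw [Xexpl]
  ext i j
  fin_cases i <;> fin_cases j <;>
    simp [Q0, Matrix.mul_apply, Fin.sum_univ_four, Matrix.conjTranspose_apply,
      Matrix.diagonal, Complex.ext_iff] <;> norm_num

lemma Q0Y : Q0ᴴ * tensor σy σy * Q0 = (2:ℂ) • Matrix.diagonal ![-1,1,-1,1] := by
  rw [Yexpl]
  ext i j
  fin_cases i <;> fin_cases j <;>
    simp [Q0, Matrix.mul_apply, Fin.sum_univ_four, Matrix.conjTranspose_apply,
      Matrix.diagonal, Complex.ext_iff] <;> norm_num

lemma Q0Z : Q0ᴴ * tensor σz σz * Q0 = (2:ℂ) • Matrix.diagonal ![1,-1,-1,1] := by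
  rw [Zexpl]
  ext i j
  fin_cases i <;> fin_cases j <;>
    simp [Q0, Matrix.mul_apply, Fin.sum_univ_four, Matrix.conjTranspose_apply,
      Matrix.diagonal, Complex.ext_iff] <;> norm_num

lemma Q_eq : Q = ((Real.sqrt 2 : ℂ))⁻¹ • Q0 := rfl

lemma QH_eq : Qᴴ = ((Real.sqrt 2 : ℂ))⁻¹ • Q0ᴴ := by
  rw [Q_eq, Matrix.conjTranspose_smul]
  congr 1
  rw [star_inv₀, Complex.star_def, Complex.conj_ofReal]

lemma sqrt2_fact : ((Real.sqrt 2 : ℂ))⁻¹ * ((Real.sqrt 2 : ℂ))⁻¹ * 2 = 1 := by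
  rw [← mul_inv, ← Complex.ofReal_mul,
    Real.mul_self_sqrt (by norm_num : (0:ℝ) ≤ 2)]
  norm_num

lemma QQH : Q * Qᴴ = 1 := by
  rw [QH_eq, Q_eq, smul_mul_assoc, mul_smul_comm, Q0_unitary', smul_smul, smul_smul,
    sqrt2_fact, one_smul]

lemma conjQ {W D : Matrix (Fin 4) (Fin 4) ℂ} (h : Q0ᴴ * W * Q0 = (2:ℂ) • D) :
    Qᴴ * W * Q = D := by
  rw [QH_eq, Q_eq, smul_mul_assoc, smul_mul_assoc, mul_smul_comm, h, smul_smul, smul_smul,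
    sqrt2_fact, one_smul]

/-- `cos (t/2) + i sin (t/2)`. -/
def uu (t : ℝ) : ℂ := (Real.cos (t/2) : ℂ) + (Real.sin (t/2) : ℂ) * Complex.I
/-- `cos (t/2) - i sin (t/2)`. -/
def vv (t : ℝ) : ℂ := (Real.cos (t/2) : ℂ) - (Real.sin (t/2) : ℂ) * Complex.I

lemma half_angle (t : ℝ) :
    Real.cos t = Real.cos (t/2)^2 - Real.sin (t/2)^2 ∧
      Real.sin t = 2 * Real.sin (t/2) * Real.cos (t/2) := by
  constructor
  · conv_lhs => rw [show t = 2*(t/2) by ring]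
    rw [Real.cos_two_mul']
  · conv_lhs => rw [show t = 2*(t/2) by ring]
    rw [Real.sin_two_mul]

lemma u_sq (t : ℝ) : uu t * uu t = (Real.cos t : ℂ) + (Real.sin t : ℂ) * Complex.I := by
  rw [(half_angle t).1, (half_angle t).2]
  unfold uu
  push_cast
  linear_combination (Complex.sin ((t : ℂ)/2))^2 * Complex.I_sq

lemma v_sq (t : ℝ) : vv t * vv t = (Real.cos t : ℂ) - (Real.sin t : ℂ) * Complex.I := by
  rw [(half_angle t).1, (half_angle t).2]
  unfold vv
  push_cast
  linear_combination (Complex.sin ((t : ℂ)/2))^2 * Complex.I_sq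

lemma conj_smul_one_add_smul {c b : ℂ} {W D : Matrix (Fin 4) (Fin 4) ℂ}
    (h : Qᴴ * W * Q = D) :
    Qᴴ * (c • (1 : Matrix (Fin 4) (Fin 4) ℂ) + b • W) * Q
      = c • (1 : Matrix (Fin 4) (Fin 4) ℂ) + b • D := by
  have h1 : Qᴴ * (1 : Matrix (Fin 4) (Fin 4) ℂ) * Q = 1 := by
    refine conjQ ?_
    rw [Matrix.mul_one, Q0_unitary]
  rw [Matrix.mul_add, Matrix.add_mul, mul_smul_comm, smul_mul_assoc, mul_smul_comm,
    smul_mul_assoc, h1, h]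

lemma QE1Q (t : ℝ) :
    Qᴴ * NormedSpace.exp ((((t : ℂ) / 2) * Complex.I) • tensor σx σx) * Q
      = Matrix.diagonal ![uu t, uu t, vv t, vv t] := by
  have he : ((((t : ℂ)) / 2) * Complex.I) • tensor σx σx
      = (((t/2 : ℝ) : ℂ) * Complex.I) • tensor σx σx := by push_cast; ring_nf
  rw [he, exp_invol _ _ XX, conj_smul_one_add_smul (conjQ Q0X)]
  ext i j
  fin_cases i <;> fin_cases j <;>
    simp [uu, vv, Matrix.diagonal, Matrix.one_apply] <;> ring

lemma QE2Q (t : ℝ) :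
    Qᴴ * NormedSpace.exp ((((t : ℂ) / 2) * Complex.I) • tensor σy σy) * Q
      = Matrix.diagonal ![vv t, uu t, vv t, uu t] := by
  have he : ((((t : ℂ)) / 2) * Complex.I) • tensor σy σy
      = (((t/2 : ℝ) : ℂ) * Complex.I) • tensor σy σy := by push_cast; ring_nf
  rw [he, exp_invol _ _ YY, conj_smul_one_add_smul (conjQ Q0Y)]
  ext i j
  fin_cases i <;> fin_cases j <;>
    simp [uu, vv, Matrix.diagonal, Matrix.one_apply] <;> ring

lemma QE3Q (t : ℝ) :
    Qᴴ * NormedSpace.exp ((((t : ℂ) / 2) * Complex.I) • tensor σz σz) * Q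
      = Matrix.diagonal ![uu t, vv t, vv t, uu t] := by
  have he : ((((t : ℂ)) / 2) * Complex.I) • tensor σz σz
      = (((t/2 : ℝ) : ℂ) * Complex.I) • tensor σz σz := by push_cast; ring_nf
  rw [he, exp_invol _ _ ZZ, conj_smul_one_add_smul (conjQ Q0Z)]
  ext i j
  fin_cases i <;> fin_cases j <;>
    simp [uu, vv, Matrix.diagonal, Matrix.one_apply] <;> ring

lemma conj_mul (B C : Matrix (Fin 4) (Fin 4) ℂ) :
    (Qᴴ * B * Q) * (Qᴴ * C * Q) = Qᴴ * (B * C) * Q := by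
  rw [mul_assoc (Qᴴ * B) Q (Qᴴ * C * Q), ← mul_assoc Q (Qᴴ * C) Q, ← mul_assoc Q Qᴴ C,
    QQH, one_mul, ← mul_assoc (Qᴴ * B) C Q, mul_assoc Qᴴ B C]

lemma QAQ (c1 c2 c3 : ℝ) :
    Qᴴ * A c1 c2 c3 * Q =
      Matrix.diagonal ![uu c1 * vv c2 * uu c3, uu c1 * uu c2 * vv c3,
        vv c1 * vv c2 * vv c3, vv c1 * uu c2 * uu c3] := by
  show Qᴴ * (NormedSpace.exp ((((c1 : ℂ) / 2) * Complex.I) • tensor σx σx) *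
      NormedSpace.exp ((((c2 : ℂ) / 2) * Complex.I) • tensor σy σy) *
      NormedSpace.exp ((((c3 : ℂ) / 2) * Complex.I) • tensor σz σz)) * Q = _
  rw [← conj_mul, ← conj_mul, QE1Q, QE2Q, QE3Q, Matrix.diagonal_mul_diagonal,
    Matrix.diagonal_mul_diagonal]
  ext i j
  fin_cases i <;> fin_cases j <;> simp [Matrix.diagonal]

end Aux17

end Aux17

/-- Makhlin-type invariants of the canonical gate `A(c1, c2, c3)`:
`tr(m(A)) = 4(cos c1 cos c2 cos c3 + i sin c1 sin c2 sin c3)` and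
`(tr(m(A))² - tr(m(A)²))/4 = 2(cos²c1 + cos²c2 + cos²c3) - 3`. -/
theorem stmt17 (c1 c2 c3 : ℝ) :
    (mInv (A c1 c2 c3)).trace =
      4 * (((Real.cos c1 * Real.cos c2 * Real.cos c3 : ℝ) : ℂ) +
        Complex.I * ((Real.sin c1 * Real.sin c2 * Real.sin c3 : ℝ) : ℂ)) ∧
    ((mInv (A c1 c2 c3)).trace ^ 2 - (mInv (A c1 c2 c3) * mInv (A c1 c2 c3)).trace) / 4 =
      ((2 * (Real.cos c1 ^ 2 + Real.cos c2 ^ 2 + Real.cos c3 ^ 2) - 3 : ℝ) : ℂ) := by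
  classical
  have hd := Aux17.QAQ c1 c2 c3
  set d : Fin 4 → ℂ := ![Aux17.uu c1 * Aux17.vv c2 * Aux17.uu c3,
    Aux17.uu c1 * Aux17.uu c2 * Aux17.vv c3,
    Aux17.vv c1 * Aux17.vv c2 * Aux17.vv c3,
    Aux17.vv c1 * Aux17.uu c2 * Aux17.uu c3] with hdv
  have hm : mInv (A c1 c2 c3) = Matrix.diagonal (fun i => d i * d i) := by
    unfold mInv
    rw [hd, Matrix.diagonal_transpose, Matrix.diagonal_mul_diagonal]
  set P1 : ℂ := (Real.cos c1 : ℂ) + (Real.sin c1 : ℂ) * Complex.I with hP1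
  set M1 : ℂ := (Real.cos c1 : ℂ) - (Real.sin c1 : ℂ) * Complex.I with hM1
  set P2 : ℂ := (Real.cos c2 : ℂ) + (Real.sin c2 : ℂ) * Complex.I with hP2
  set M2 : ℂ := (Real.cos c2 : ℂ) - (Real.sin c2 : ℂ) * Complex.I with hM2
  set P3 : ℂ := (Real.cos c3 : ℂ) + (Real.sin c3 : ℂ) * Complex.I with hP3
  set M3 : ℂ := (Real.cos c3 : ℂ) - (Real.sin c3 : ℂ) * Complex.I with hM3
  have hd0 : d 0 * d 0 = P1 * M2 * P3 := by
    show (Aux17.uu c1 * Aux17.vv c2 * Aux17.uu c3) * (Aux17.uu c1 * Aux17.vv c2 * Aux17.uu c3) = _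
    rw [show (Aux17.uu c1 * Aux17.vv c2 * Aux17.uu c3) * (Aux17.uu c1 * Aux17.vv c2 * Aux17.uu c3)
        = (Aux17.uu c1 * Aux17.uu c1) * (Aux17.vv c2 * Aux17.vv c2) * (Aux17.uu c3 * Aux17.uu c3)
      from by ring, Aux17.u_sq, Aux17.v_sq, Aux17.u_sq, ← hP1, ← hM2, ← hP3]
  have hd1 : d 1 * d 1 = P1 * P2 * M3 := by
    show (Aux17.uu c1 * Aux17.uu c2 * Aux17.vv c3) * (Aux17.uu c1 * Aux17.uu c2 * Aux17.vv c3) = _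
    rw [show (Aux17.uu c1 * Aux17.uu c2 * Aux17.vv c3) * (Aux17.uu c1 * Aux17.uu c2 * Aux17.vv c3)
        = (Aux17.uu c1 * Aux17.uu c1) * (Aux17.uu c2 * Aux17.uu c2) * (Aux17.vv c3 * Aux17.vv c3)
      from by ring, Aux17.u_sq, Aux17.u_sq, Aux17.v_sq, ← hP1, ← hP2, ← hM3]
  have hd2 : d 2 * d 2 = M1 * M2 * M3 := by
    show (Aux17.vv c1 * Aux17.vv c2 * Aux17.vv c3) * (Aux17.vv c1 * Aux17.vv c2 * Aux17.vv c3) = _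
    rw [show (Aux17.vv c1 * Aux17.vv c2 * Aux17.vv c3) * (Aux17.vv c1 * Aux17.vv c2 * Aux17.vv c3)
        = (Aux17.vv c1 * Aux17.vv c1) * (Aux17.vv c2 * Aux17.vv c2) * (Aux17.vv c3 * Aux17.vv c3)
      from by ring, Aux17.v_sq, Aux17.v_sq, Aux17.v_sq, ← hM1, ← hM2, ← hM3]
  have hd3 : d 3 * d 3 = M1 * P2 * P3 := by
    show (Aux17.vv c1 * Aux17.uu c2 * Aux17.uu c3) * (Aux17.vv c1 * Aux17.uu c2 * Aux17.uu c3) = _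
    rw [show (Aux17.vv c1 * Aux17.uu c2 * Aux17.uu c3) * (Aux17.vv c1 * Aux17.uu c2 * Aux17.uu c3)
        = (Aux17.vv c1 * Aux17.vv c1) * (Aux17.uu c2 * Aux17.uu c2) * (Aux17.uu c3 * Aux17.uu c3)
      from by ring, Aux17.v_sq, Aux17.u_sq, Aux17.u_sq, ← hM1, ← hP2, ← hP3]
  have htr : (mInv (A c1 c2 c3)).trace = P1*M2*P3 + P1*P2*M3 + M1*M2*M3 + M1*P2*P3 := by
    rw [hm, Matrix.trace_diagonal, Fin.sum_univ_four, hd0, hd1, hd2, hd3]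
  have htr2 : (mInv (A c1 c2 c3) * mInv (A c1 c2 c3)).trace =
      (P1*M2*P3)*(P1*M2*P3) + (P1*P2*M3)*(P1*P2*M3)
        + (M1*M2*M3)*(M1*M2*M3) + (M1*P2*P3)*(M1*P2*P3) := by
    rw [hm, Matrix.diagonal_mul_diagonal, Matrix.trace_diagonal, Fin.sum_univ_four]
    simp only [Pi.mul_apply, hd0, hd1, hd2, hd3]
  have h1 := Real.sin_sq_add_cos_sq c1
  have h2 := Real.sin_sq_add_cos_sq c2
  have h3 := Real.sin_sq_add_cos_sq c3
  constructor
  · rw [htr, hP1, hM1, hP2, hM2, hP3, hM3]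
    simp only [Complex.ofReal_mul]
    apply Complex.ext <;>
      simp [Complex.add_re, Complex.add_im, Complex.sub_re, Complex.sub_im,
        Complex.mul_re, Complex.mul_im] <;> ring
  · rw [htr, htr2, div_eq_iff (by norm_num : (4:ℂ) ≠ 0), sq, hP1, hM1, hP2, hM2, hP3, hM3]
    simp only [Complex.ofReal_mul, Complex.ofReal_sub, Complex.ofReal_add,
      Complex.ofReal_pow, Complex.ofReal_ofNat]
    apply Complex.ext
    · simp only [Complex.add_re, Complex.add_im, Complex.sub_re, Complex.sub_im,
        Complex.mul_re, Complex.mul_im, Complex.ofReal_re, Complex.ofReal_im,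
        Complex.I_re, Complex.I_im, Complex.one_re, Complex.one_im, Complex.re_ofNat,
        Complex.im_ofNat, pow_two, mul_zero, zero_mul,
        mul_one, one_mul, sub_zero, zero_sub, add_zero, zero_add, neg_neg, neg_zero]
      linear_combination (4*((Real.cos c2^2 - Real.sin c2^2) + (Real.cos c3^2 - Real.sin c3^2) - 1)) * h1
        + (4*((Real.cos c1^2 - Real.sin c1^2)
            + (Real.cos c3^2 - Real.sin c3^2)*(Real.cos c1^2 + Real.sin c1^2) - 1)) * h2
        + (4*((Real.cos c1^2 - Real.sin c1^2)*(Real.cos c2^2 + Real.sin c2^2)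
            + (Real.cos c2^2 - Real.sin c2^2)*(Real.cos c1^2 + Real.sin c1^2) - 1)) * h3
    · simp only [Complex.add_re, Complex.add_im, Complex.sub_re, Complex.sub_im,
        Complex.mul_re, Complex.mul_im, Complex.ofReal_re, Complex.ofReal_im,
        Complex.I_re, Complex.I_im, Complex.one_re, Complex.one_im, Complex.re_ofNat,
        Complex.im_ofNat, pow_two, mul_zero, zero_mul,
        mul_one, one_mul, sub_zero, zero_sub, add_zero, zero_add, neg_neg, neg_zero]
      ring
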